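/- For every positive integer L, the multiplication function φ(x,y) = xy on [−1,1]² satisfies dist(φ, F_{3L,2}(ℝ²)) ≤ 3 · 2^{−2L}, i.e., there exists f in the neural-net class F_{3L,2}(ℝ²) with |xy − f(x,y)| ≤ 3 · 2^{−2L} for all (x,y) ∈ [−1,1]². -/

import Mathlib

noncomputable section

/-- `f : ℝ^d → ℝ` belongs to the neural-net class `F_{L,M}(ℝ^d)`. -/
def NNClass (d L M : ℕ) (f : (Fin d → ℝ) → ℝ) : Prop :=
  ∃ y : Fin L → Fin M → (Fin d → ℝ) → ℝ,
    (∀ (h0 : 0 < L) (m : Fin M), ∃ (w : Fin d → ℝ) (b : ℝ),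
      ∀ x, y ⟨0, h0⟩ m x = max (b + ∑ i, w i * x i) 0) ∧
    (∀ (l : ℕ) (hl : l + 1 < L) (m : Fin M),
      ∃ (w : Fin d → ℝ) (v : Fin M → ℝ) (b : ℝ),
      ∀ x, y ⟨l + 1, hl⟩ m x =
        max (b + ∑ i, w i * x i + ∑ j, v j * y ⟨l, Nat.lt_of_succ_lt hl⟩ j x) 0) ∧
    (∃ (w : Fin d → ℝ) (c : Fin L → Fin M → ℝ) (b : ℝ),
      ∀ x, f x = b + ∑ i, w i * x i + ∑ l, ∑ m, c l m * y l m x)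

namespace MulApprox

/-- The hat function on [0,1], expressed via ReLUs. -/
def G (u : ℝ) : ℝ := 2 * max u 0 - 4 * max (u - 1/2) 0

lemma G_mem {u : ℝ} (h : u ∈ Set.Icc (0:ℝ) 1) : G u ∈ Set.Icc (0:ℝ) 1 := by
  obtain ⟨h0, h1⟩ := h
  unfold G
  rcases le_or_gt u (1/2) with h | h
  · rw [max_eq_left h0, max_eq_right (by linarith)]
    constructor <;> linarith
  · rw [max_eq_left h0, max_eq_left (by linarith)]
    constructor <;> linarith

lemma G_key {u : ℝ} (h : u ∈ Set.Icc (0:ℝ) 1) :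
    u - u^2 = (G u + (G u - (G u)^2)) / 4 := by
  obtain ⟨h0, h1⟩ := h
  unfold G
  rcases le_or_gt u (1/2) with h | h
  · rw [max_eq_left h0, max_eq_right (by linarith)]
    ring
  · rw [max_eq_left h0, max_eq_left (by linarith)]
    ring

lemma iter_mem (K : ℕ) {t : ℝ} (ht : t ∈ Set.Icc (0:ℝ) 1) :
    G^[K] t ∈ Set.Icc (0:ℝ) 1 := by
  induction K with
  | zero => simpa using ht
  | succ K ih => rw [Function.iterate_succ_apply']; exact G_mem ih

lemma sum_key (K : ℕ) {t : ℝ} (ht : t ∈ Set.Icc (0:ℝ) 1) :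
    t - t^2 = (∑ k ∈ Finset.range K, G^[k+1] t / 4^(k+1))
      + (G^[K] t - (G^[K] t)^2) / 4^K := by
  induction K with
  | zero => simp
  | succ K ih =>
    rw [ih, Finset.sum_range_succ, Function.iterate_succ_apply']
    have key := G_key (iter_mem K ht)
    rw [key]
    have h4 : (4:ℝ)^K ≠ 0 := by positivity
    field_simp
    ring

/-- first input transform -/
def T (x : Fin 2 → ℝ) : ℝ := (x 0 + x 1 + 2) / 4

/-- second input transform -/
def S (x : Fin 2 → ℝ) : ℝ := (x 0 - x 1 + 2) / 4

/-- the hidden units -/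
def yfun (L : ℕ) (l : ℕ) (m : Fin 2) (x : Fin 2 → ℝ) : ℝ :=
  if l < L then
    (if m = 0 then max (G^[l] (T x)) 0 else max (G^[l] (T x) - 1/2) 0)
  else if l < 2*L then
    (if m = 0 then max (G^[l-L] (S x)) 0 else max (G^[l-L] (S x) - 1/2) 0)
  else 0

/-- output coefficients -/
def coeff (L : ℕ) (l : ℕ) (m : Fin 2) : ℝ :=
  if l < L then (if m = 0 then -2 * (1/4:ℝ)^l else 4 * (1/4:ℝ)^l)
  else if l < 2*L then (if m = 0 then 2 * (1/4:ℝ)^(l-L) else -4 * (1/4:ℝ)^(l-L))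
  else 0

/-- the network function -/
def ffun (L : ℕ) (x : Fin 2 → ℝ) : ℝ :=
  ∑ l : Fin (3*L), ∑ m : Fin 2, coeff L l.1 m * yfun L l.1 m x

lemma ffun_eq (L : ℕ) (x : Fin 2 → ℝ) :
    ffun L x = -4 * (∑ k ∈ Finset.range L, G^[k+1] (T x) / 4^(k+1))
             + 4 * (∑ k ∈ Finset.range L, G^[k+1] (S x) / 4^(k+1)) := by
  unfold ffun
  rw [Fin.sum_univ_eq_sum_range (fun l => ∑ m : Fin 2, coeff L l m * yfun L l m x) (3*L)]
  have hsplit : Finset.range (3*L) = Finset.range (2*L) ∪ Finset.Ico (2*L) (3*L) := by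
    rw [Finset.range_eq_Ico, Finset.range_eq_Ico]
    exact (Finset.Ico_union_Ico_eq_Ico (a := 0) (b := 2*L) (c := 3*L) (by omega) (by omega)).symm
  have hsplit2 : Finset.range (2*L) = Finset.range L ∪ Finset.Ico L (2*L) := by
    rw [Finset.range_eq_Ico, Finset.range_eq_Ico]
    exact (Finset.Ico_union_Ico_eq_Ico (a := 0) (b := L) (c := 2*L) (by omega) (by omega)).symm
  rw [hsplit, Finset.sum_union (by
    rw [Finset.range_eq_Ico]; exact Finset.Ico_disjoint_Ico_consecutive 0 (2*L) (3*L))]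
  rw [hsplit2, Finset.sum_union (by
    rw [Finset.range_eq_Ico]; exact Finset.Ico_disjoint_Ico_consecutive 0 L (2*L))]
  have h3 : ∑ l ∈ Finset.Ico (2*L) (3*L), (∑ m : Fin 2, coeff L l m * yfun L l m x) = 0 := by
    apply Finset.sum_eq_zero
    intro l hl
    rw [Finset.mem_Ico] at hl
    have h1 : ¬ l < L := by omega
    have h2 : ¬ l < 2*L := by omega
    simp [coeff, h1, h2]
  have h1 : ∀ l ∈ Finset.range L, (∑ m : Fin 2, coeff L l m * yfun L l m x)
      = -4 * (G^[l+1] (T x) / 4^(l+1)) := by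
    intro l hl
    rw [Finset.mem_range] at hl
    have hG : G^[l+1] (T x) = 2 * max (G^[l] (T x)) 0 - 4 * max (G^[l] (T x) - 1/2) 0 := by
      rw [Function.iterate_succ_apply']; rfl
    rw [Fin.sum_univ_two]
    simp only [coeff, yfun, if_pos hl]
    norm_num [hG]
    have h4 : (4:ℝ)^l ≠ 0 := by positivity
    field_simp
    have h5 : (4:ℝ)⁻¹ ^ l * 4 ^ l = 1 := by rw [← mul_pow]; norm_num
    have h6 : max ((2 * G^[l] (T x) - 1) / 2) (0:ℝ) = max (-1 / 2 + G^[l] (T x)) 0 := by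
      congr 1; ring
    linear_combination (-(max (G^[l] (T x)) 0 * 8) + max (-1 / 2 + G^[l] (T x)) 0 * 16) * h5
      + 16 * ((4:ℝ)⁻¹ ^ l * 4 ^ l - 1) * h6
  have h2 : ∑ l ∈ Finset.Ico L (2*L), (∑ m : Fin 2, coeff L l m * yfun L l m x)
      = ∑ k ∈ Finset.range L, 4 * (G^[k+1] (S x) / 4^(k+1)) := by
    rw [Finset.sum_Ico_eq_sum_range]
    have hLL : 2*L - L = L := by omega
    rw [hLL]
    apply Finset.sum_congr rfl
    intro k hk
    rw [Finset.mem_range] at hk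
    have ha : ¬ (L + k < L) := by omega
    have hb : L + k < 2*L := by omega
    have hc : L + k - L = k := by omega
    have hG : G^[k+1] (S x) = 2 * max (G^[k] (S x)) 0 - 4 * max (G^[k] (S x) - 1/2) 0 := by
      rw [Function.iterate_succ_apply']; rfl
    rw [Fin.sum_univ_two]
    simp only [coeff, yfun, if_neg ha, if_pos hb, hc]
    norm_num [hG]
    have h4 : (4:ℝ)^k ≠ 0 := by positivity
    field_simp
    have h5 : (4:ℝ)⁻¹ ^ k * 4 ^ k = 1 := by rw [← mul_pow]; norm_num
    have h6 : max ((2 * G^[k] (S x) - 1) / 2) (0:ℝ) = max (-1 / 2 + G^[k] (S x)) 0 := by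
      congr 1; ring
    linear_combination (max (G^[k] (S x)) 0 * 8 - max (-1 / 2 + G^[k] (S x)) 0 * 16) * h5
      - 16 * ((4:ℝ)⁻¹ ^ k * 4 ^ k - 1) * h6
  rw [Finset.sum_congr rfl h1, h2, h3, ← Finset.mul_sum, ← Finset.mul_sum]
  ring

end MulApprox

open MulApprox in
set_option maxHeartbeats 1000000 in
theorem mul_approx (L : ℕ) (hL : 0 < L) :
    ∃ f : (Fin 2 → ℝ) → ℝ, NNClass 2 (3 * L) 2 f ∧
      ∀ x ∈ Set.Icc (-1 : ℝ) 1, ∀ y ∈ Set.Icc (-1 : ℝ) 1,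
        |x * y - f ![x, y]| ≤ 3 * (2 : ℝ) ^ (-(2 * L : ℤ)) := by
  refine ⟨ffun L, ⟨fun l m x => yfun L l.1 m x, ?_, ?_, ?_⟩, ?_⟩
  · -- first layer
    intro h0 m
    fin_cases m
    · refine ⟨![1/4, 1/4], 1/2, fun x => ?_⟩
      simp only [yfun, if_pos hL, if_pos rfl, Function.iterate_zero_apply, Fin.sum_univ_two]
      norm_num [T]
      congr 1
      ring
    · refine ⟨![1/4, 1/4], 0, fun x => ?_⟩
      simp only [yfun, if_pos hL, Function.iterate_zero_apply, Fin.sum_univ_two]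
      norm_num [T]
      congr 1
      ring
  · -- hidden layers
    intro l hl m
    by_cases h1 : l + 1 < L
    · -- t-chain recursion
      refine ⟨0, ![2, -4], if m = 0 then 0 else -(1/2), fun x => ?_⟩
      have hl' : l < L := by omega
      have hG : G^[l+1] (T x) = 2 * max (G^[l] (T x)) 0 - 4 * max (G^[l] (T x) - 1/2) 0 := by
        rw [Function.iterate_succ_apply']; rfl
      simp only [yfun, if_pos h1, if_pos hl', Fin.sum_univ_two]
      fin_cases m <;> norm_num [hG] <;> congr 1 <;> ring
    · by_cases h2 : l + 1 = L
      · -- start of s-chain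
        refine ⟨![1/4, -(1/4)], 0, if m = 0 then 1/2 else 0, fun x => ?_⟩
        have ha : ¬ (l + 1 < L) := h1
        have hb : l + 1 < 2*L := by omega
        have hc : l + 1 - L = 0 := by omega
        simp only [yfun, if_neg ha, if_pos hb, hc, Function.iterate_zero_apply,
          Fin.sum_univ_two]
        fin_cases m <;> norm_num [S] <;> congr 1 <;> ring
      · by_cases h3 : l + 1 < 2*L
        · -- s-chain recursion
          refine ⟨0, ![2, -4], if m = 0 then 0 else -(1/2), fun x => ?_⟩
          have ha : ¬ (l + 1 < L) := h1
          have ha' : ¬ (l < L) := by omega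
          have hb : l < 2*L := by omega
          have hc : l + 1 - L = (l - L) + 1 := by omega
          have hG : G^[(l-L)+1] (S x)
              = 2 * max (G^[l-L] (S x)) 0 - 4 * max (G^[l-L] (S x) - 1/2) 0 := by
            rw [Function.iterate_succ_apply']; rfl
          simp only [yfun, if_neg ha, if_neg ha', if_pos h3, if_pos hb, hc, Fin.sum_univ_two]
          fin_cases m <;> norm_num [hG] <;> congr 1 <;> ring
        · -- zero layers
          refine ⟨0, 0, 0, fun x => ?_⟩
          have ha : ¬ (l + 1 < L) := h1
          have hb : ¬ (l + 1 < 2*L) := h3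
          simp [yfun, ha, hb, Fin.sum_univ_two]
  · -- output layer
    refine ⟨0, fun l m => coeff L l.1 m, 0, fun x => ?_⟩
    simp [ffun]
  · -- the error bound
    intro a ha b hb
    obtain ⟨ha1, ha2⟩ := ha
    obtain ⟨hb1, hb2⟩ := hb
    have hT : T ![a, b] = (a + b + 2) / 4 := by simp [T]
    have hS : S ![a, b] = (a - b + 2) / 4 := by simp [S]
    have htm : T ![a, b] ∈ Set.Icc (0:ℝ) 1 := by
      rw [hT]; constructor <;> [linarith; linarith]
    have hsm : S ![a, b] ∈ Set.Icc (0:ℝ) 1 := by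
      rw [hS]; constructor <;> [linarith; linarith]
    have keyT := sum_key L htm
    have keyS := sum_key L hsm
    rw [ffun_eq]
    have hsumT : (∑ k ∈ Finset.range L, G^[k+1] (T ![a, b]) / 4^(k+1))
        = (T ![a, b] - (T ![a, b])^2)
          - (G^[L] (T ![a, b]) - (G^[L] (T ![a, b]))^2) / 4^L := by linarith
    have hsumS : (∑ k ∈ Finset.range L, G^[k+1] (S ![a, b]) / 4^(k+1))
        = (S ![a, b] - (S ![a, b])^2)
          - (G^[L] (S ![a, b]) - (G^[L] (S ![a, b]))^2) / 4^L := by linarith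
    rw [hsumT, hsumS]
    have hab : a * b = 4*(T ![a, b])^2 - 4*(S ![a, b])^2 - 4*(T ![a, b]) + 4*(S ![a, b]) := by
      rw [hT, hS]; ring
    obtain ⟨h0, h1⟩ := iter_mem L htm
    obtain ⟨h0', h1'⟩ := iter_mem L hsm
    have hq1 : 0 ≤ G^[L] (T ![a, b]) - (G^[L] (T ![a, b]))^2 := by nlinarith
    have hq2 : G^[L] (T ![a, b]) - (G^[L] (T ![a, b]))^2 ≤ 1/4 := by
      nlinarith [sq_nonneg (G^[L] (T ![a, b]) - 1/2)]
    have hq3 : 0 ≤ G^[L] (S ![a, b]) - (G^[L] (S ![a, b]))^2 := by nlinarith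
    have hq4 : G^[L] (S ![a, b]) - (G^[L] (S ![a, b]))^2 ≤ 1/4 := by
      nlinarith [sq_nonneg (G^[L] (S ![a, b]) - 1/2)]
    have h4L : (0:ℝ) < 4^L := by positivity
    have hpow : (2:ℝ) ^ (-(2 * L : ℤ)) = ((4:ℝ)^L)⁻¹ := by
      rw [zpow_neg]
      congr 1
      rw [show ((2 * L : ℤ)) = ((2*L : ℕ) : ℤ) by push_cast; ring, zpow_natCast, pow_mul]
      norm_num
    rw [hpow]
    have goal_eq : a * b - (-4 * ((T ![a, b] - (T ![a, b])^2)
          - (G^[L] (T ![a, b]) - (G^[L] (T ![a, b]))^2) / 4^L)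
        + 4 * ((S ![a, b] - (S ![a, b])^2)
          - (G^[L] (S ![a, b]) - (G^[L] (S ![a, b]))^2) / 4^L))
      = 4 * ((G^[L] (S ![a, b]) - (G^[L] (S ![a, b]))^2) / 4^L)
        - 4 * ((G^[L] (T ![a, b]) - (G^[L] (T ![a, b]))^2) / 4^L) := by
      rw [hab]; ring
    rw [goal_eq, abs_le]
    have eA1 : 0 ≤ (G^[L] (T ![a, b]) - (G^[L] (T ![a, b]))^2) / 4^L :=
      div_nonneg hq1 (le_of_lt h4L)
    have eB1 : 0 ≤ (G^[L] (S ![a, b]) - (G^[L] (S ![a, b]))^2) / 4^L :=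
      div_nonneg hq3 (le_of_lt h4L)
    have hrw : ((4:ℝ)^L)⁻¹ / 4 * 4^L = 1/4 := by field_simp
    have eA2 : (G^[L] (T ![a, b]) - (G^[L] (T ![a, b]))^2) / 4^L ≤ ((4:ℝ)^L)⁻¹ / 4 := by
      rw [div_le_iff₀ h4L, hrw]; exact hq2
    have eB2 : (G^[L] (S ![a, b]) - (G^[L] (S ![a, b]))^2) / 4^L ≤ ((4:ℝ)^L)⁻¹ / 4 := by
      rw [div_le_iff₀ h4L, hrw]; exact hq4
    have hinv : (0:ℝ) ≤ ((4:ℝ)^L)⁻¹ := by positivity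
    constructor <;> linarith
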